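/- arXiv:0901.2589 — 3 statements merged into one kernel-verified Lean document; each statement's English description precedes it below -/
import Mathlib

section
/- For every pair of nonempty finite sets A, B in the plane ℝ², there exists a line L such that L bisects A (at most half the points of A lie strictly on each side of L), L bisects B similarly, and L contains at least one point of A and at least one point of B. -/
open Finset

namespace HamAux

variable {α : Type*} [DecidableEq α]

variable {X : Finset α} {f : α → ℝ}

lemma pc_ne (hX : X.Nonempty) : (X.powersetCard ((X.card + 1) / 2)).Nonempty := by
  refine Finset.powersetCard_nonempty.2 ?_
  have := Finset.card_pos.2 hX
  omega

/-- the `(n+1)/2`-th smallest value of `f` on `X` (lower median), as min over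
k-subsets of maxes. -/
noncomputable def med (X : Finset α) (hX : X.Nonempty) (f : α → ℝ) : ℝ :=
  (X.powersetCard ((X.card + 1) / 2)).inf'
    (pc_ne hX)
    (fun S => if h : S.Nonempty then S.sup' h f else 0)

lemma mem_pc_nonempty (hX : X.Nonempty) {S : Finset α} (hS : S ∈ X.powersetCard ((X.card + 1) / 2)) :
    S.Nonempty ∧ S ⊆ X ∧ S.card = (X.card + 1) / 2 := by
  rw [Finset.mem_powersetCard] at hS
  have h0 := Finset.card_pos.2 hX
  refine ⟨Finset.card_pos.1 ?_, hS.1, hS.2⟩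
  omega

lemma med_attained (hX : X.Nonempty) (f : α → ℝ) : ∃ a ∈ X, f a = med X hX f := by
  obtain ⟨S, hS, hval⟩ := Finset.exists_mem_eq_inf'
    (pc_ne hX)
    (fun S => if h : S.Nonempty then S.sup' h f else 0)
  obtain ⟨hSne, hSX, -⟩ := mem_pc_nonempty hX hS
  rw [dif_pos hSne] at hval
  obtain ⟨a, ha, hav⟩ := Finset.exists_mem_eq_sup' hSne f
  exact ⟨a, hSX ha, by rw [← hav, ← hval, med]⟩

lemma med_card_gt (hX : X.Nonempty) (f : α → ℝ) : (X.filter (fun x => med X hX f < f x)).card ≤ X.card - (X.card + 1) / 2 := by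
  by_contra hcon
  push_neg at hcon
  set k := (X.card + 1) / 2 with hk
  set T := X.filter (fun x => med X hX f < f x) with hT
  obtain ⟨S, hS, hval⟩ := Finset.exists_mem_eq_inf'
    (pc_ne hX)
    (fun S => if h : S.Nonempty then S.sup' h f else 0)
  obtain ⟨hSne, hSX, hScard⟩ := mem_pc_nonempty hX hS
  rw [dif_pos hSne] at hval
  have hUn : (S ∪ T).card ≤ X.card :=
    Finset.card_le_card (Finset.union_subset hSX (Finset.filter_subset _ _))
  have hint : (S ∩ T).Nonempty := by
    rw [← Finset.card_pos]
    have := Finset.card_union_add_card_inter S T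
    omega
  obtain ⟨x, hx⟩ := hint
  rw [Finset.mem_inter] at hx
  have h1 : med X hX f < f x := (Finset.mem_filter.1 hx.2).2
  have h2 : f x ≤ med X hX f := by
    rw [med, hval]; exact Finset.le_sup' f hx.1
  linarith

lemma med_card_lt (hX : X.Nonempty) (f : α → ℝ) : (X.filter (fun x => f x < med X hX f)).card ≤ (X.card + 1) / 2 - 1 := by
  by_contra hcon
  push_neg at hcon
  set k := (X.card + 1) / 2 with hk
  set T := X.filter (fun x => f x < med X hX f) with hT
  have hTX : T ⊆ X := Finset.filter_subset _ _
  have hkT : k ≤ T.card := by omega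
  obtain ⟨S, hST, hScard⟩ := Finset.exists_subset_card_eq hkT
  have hSmem : S ∈ X.powersetCard k := Finset.mem_powersetCard.2 ⟨hST.trans hTX, hScard⟩
  obtain ⟨hSne, -, -⟩ := mem_pc_nonempty hX hSmem
  have hle : med X hX f ≤ S.sup' hSne f := by
    have h2 := Finset.inf'_le (fun S => if h : S.Nonempty then S.sup' h f else 0) hSmem
    rw [dif_pos hSne] at h2
    rw [med]
    exact h2
  obtain ⟨a, ha, hav⟩ := Finset.exists_mem_eq_sup' hSne f
  have : f a < med X hX f := (Finset.mem_filter.1 (hST ha)).2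
  rw [hav] at hle
  linarith

/-- uniqueness of a bisecting attained value, odd cardinality -/
lemma med_unique (f : α → ℝ) (hodd : Odd X.card) (c c' : ℝ)
    (hc1 : ∃ a ∈ X, f a = c) (hc2 : 2 * (X.filter (fun x => f x < c)).card ≤ X.card)
    (hc3 : 2 * (X.filter (fun x => c < f x)).card ≤ X.card)
    (hd1 : ∃ a ∈ X, f a = c') (hd2 : 2 * (X.filter (fun x => f x < c')).card ≤ X.card)
    (hd3 : 2 * (X.filter (fun x => c' < f x)).card ≤ X.card) : c = c' := by
  by_contra hne
  wlog hlt : c < c' generalizing c c'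
  · exact this c' c hd1 hd2 hd3 hc1 hc2 hc3 (Ne.symm hne) (by
      rcases lt_or_gt_of_ne hne with h | h
      · exact absurd h hlt
      · exact h)
  obtain ⟨n, hn⟩ := hodd
  -- #{f ≤ c} ≥ n+1 etc
  have h1 := Finset.card_filter_add_card_filter_not (s := X) (p := fun x => f x ≤ c)
  simp only [not_le] at h1
  have h2 := Finset.card_filter_add_card_filter_not (s := X) (p := fun x => c' ≤ f x)
  simp only [not_le] at h2
  have hdisj : Disjoint (X.filter (fun x => f x ≤ c)) (X.filter (fun x => c' ≤ f x)) := by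
    rw [Finset.disjoint_left]
    intro x hx hx'
    have g1 := (Finset.mem_filter.1 hx).2
    have g2 := (Finset.mem_filter.1 hx').2
    linarith
  have hsum : ((X.filter (fun x => f x ≤ c)) ∪ (X.filter (fun x => c' ≤ f x))).card ≤ X.card :=
    Finset.card_le_card (Finset.union_subset (Finset.filter_subset _ X) (Finset.filter_subset _ X))
  rw [Finset.card_union_of_disjoint hdisj] at hsum
  omega

lemma med_le_half_lt (hX : X.Nonempty) (f : α → ℝ) :
    2 * (X.filter (fun x => f x < med X hX f)).card ≤ X.card := by
  have h := med_card_lt hX f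
  have h0 := Finset.card_pos.2 hX
  omega

lemma med_le_half_gt (hX : X.Nonempty) (f : α → ℝ) :
    2 * (X.filter (fun x => med X hX f < f x)).card ≤ X.card := by
  have h := med_card_gt hX f
  have h0 := Finset.card_pos.2 hX
  omega

lemma med_neg (hX : X.Nonempty) (hodd : Odd X.card) (f : α → ℝ) :
    med X hX (fun x => -f x) = - med X hX f := by
  apply med_unique (fun x => -f x) hodd
  · exact med_attained hX _
  · exact med_le_half_lt hX _
  · exact med_le_half_gt hX _
  · obtain ⟨a, ha, hav⟩ := med_attained hX f
    exact ⟨a, ha, by rw [hav]⟩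
  · have : (X.filter (fun x => -f x < -med X hX f)) =
        (X.filter (fun x => med X hX f < f x)) := by
      apply Finset.filter_congr
      intro x _
      simp [neg_lt_neg_iff]
    rw [this]
    exact med_le_half_gt hX f
  · have : (X.filter (fun x => -med X hX f < -f x)) =
        (X.filter (fun x => f x < med X hX f)) := by
      apply Finset.filter_congr
      intro x _
      simp [neg_lt_neg_iff]
    rw [this]
    exact med_le_half_lt hX f

lemma med_continuous (X : Finset α) (hX : X.Nonempty) (v : ℝ → α → ℝ)
    (hv : ∀ x, Continuous (fun θ => v θ x)) :
    Continuous (fun θ => med X hX (v θ)) := by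
  show Continuous (fun θ => (X.powersetCard ((X.card + 1) / 2)).inf' (pc_ne hX)
      (fun S => if h : S.Nonempty then S.sup' h (v θ) else 0))
  apply Continuous.finset_inf'_apply
  intro S hS
  obtain ⟨hSne, -, -⟩ := mem_pc_nonempty hX hS
  simp only [dif_pos hSne]
  exact Continuous.finset_sup'_apply hSne (fun x _ => hv x)

abbrev E := EuclideanSpace ℝ (Fin 2)

noncomputable def uvec (θ : ℝ) : E :=
  (WithLp.equiv 2 (Fin 2 → ℝ)).symm ![Real.cos θ, Real.sin θ]

lemma norm_uvec (θ : ℝ) : ‖uvec θ‖ = 1 := by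
  rw [EuclideanSpace.norm_eq]
  simp [uvec, Fin.sum_univ_two, WithLp.equiv_symm_apply, Real.norm_eq_abs, sq_abs,
    Real.cos_sq_add_sin_sq]

lemma inner_uvec (θ : ℝ) (x : E) :
    (inner ℝ (uvec θ) x : ℝ) = Real.cos θ * x 0 + Real.sin θ * x 1 := by
  simp [uvec, PiLp.inner_apply, Fin.sum_univ_two, WithLp.equiv_symm_apply,
    RCLike.inner_apply, starRingEnd_apply]
  ring

lemma core (A B : Finset E) (hA : A.Nonempty) (hB : B.Nonempty)
    (hAodd : Odd A.card) (hBodd : Odd B.card) :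
    ∃ (u : E) (c : ℝ), ‖u‖ = 1 ∧
      2 * (A.filter (fun x => c < (inner ℝ u x : ℝ))).card ≤ A.card ∧
      2 * (A.filter (fun x => (inner ℝ u x : ℝ) < c)).card ≤ A.card ∧
      2 * (B.filter (fun x => c < (inner ℝ u x : ℝ))).card ≤ B.card ∧
      2 * (B.filter (fun x => (inner ℝ u x : ℝ) < c)).card ≤ B.card ∧
      (∃ a ∈ A, (inner ℝ u a : ℝ) = c) ∧ (∃ b ∈ B, (inner ℝ u b : ℝ) = c) := by
  classical
  set v : ℝ → E → ℝ := fun θ x => Real.cos θ * x 0 + Real.sin θ * x 1 with hv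
  have hvc : ∀ x : E, Continuous fun θ => v θ x := fun x =>
    (Real.continuous_cos.mul continuous_const).add (Real.continuous_sin.mul continuous_const)
  set F : ℝ → ℝ := fun θ => med A hA (v θ) - med B hB (v θ) with hF
  have hFc : Continuous F :=
    (med_continuous A hA v hvc).sub (med_continuous B hB v hvc)
  have hanti : F (0 + Real.pi) = -F 0 := by
    have hveq : v (0 + Real.pi) = fun x => -(v 0 x) := by
      funext x
      simp only [hv, Real.cos_add, Real.sin_add, Real.cos_pi, Real.sin_pi]
      ring
    simp only [hF, hveq, med_neg hA hAodd, med_neg hB hBodd]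
    ring
  obtain ⟨θ, -, hθ⟩ : ∃ θ ∈ Set.uIcc 0 (0 + Real.pi), F θ = 0 := by
    have h0 : (0:ℝ) ∈ Set.uIcc (F 0) (F (0 + Real.pi)) := by
      rw [hanti, Set.mem_uIcc]
      rcases le_total (F 0) 0 with h | h
      · exact Or.inl ⟨h, by linarith⟩
      · exact Or.inr ⟨by linarith, h⟩
    obtain ⟨θ, hθ1, hθ2⟩ := intermediate_value_uIcc (hFc.continuousOn) h0
    exact ⟨θ, hθ1, hθ2⟩
  have hmedeq : med A hA (v θ) = med B hB (v θ) := by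
    have : med A hA (v θ) - med B hB (v θ) = 0 := hθ
    linarith
  set c := med A hA (v θ) with hc
  refine ⟨uvec θ, c, norm_uvec θ, ?_, ?_, ?_, ?_, ?_, ?_⟩
  · have heq : A.filter (fun x => c < (inner ℝ (uvec θ) x : ℝ)) =
        A.filter (fun x => med A hA (v θ) < v θ x) :=
      Finset.filter_congr (fun x _ => by rw [inner_uvec, ← hc])
    rw [heq]; exact med_le_half_gt hA _
  · have heq : A.filter (fun x => (inner ℝ (uvec θ) x : ℝ) < c) =
        A.filter (fun x => v θ x < med A hA (v θ)) :=
      Finset.filter_congr (fun x _ => by rw [inner_uvec, ← hc])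
    rw [heq]; exact med_le_half_lt hA _
  · have heq : B.filter (fun x => c < (inner ℝ (uvec θ) x : ℝ)) =
        B.filter (fun x => med B hB (v θ) < v θ x) :=
      Finset.filter_congr (fun x _ => by rw [inner_uvec, hmedeq])
    rw [heq]; exact med_le_half_gt hB _
  · have heq : B.filter (fun x => (inner ℝ (uvec θ) x : ℝ) < c) =
        B.filter (fun x => v θ x < med B hB (v θ)) :=
      Finset.filter_congr (fun x _ => by rw [inner_uvec, hmedeq])
    rw [heq]; exact med_le_half_lt hB _
  · obtain ⟨a, ha, hav⟩ := med_attained hA (v θ)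
    exact ⟨a, ha, by rw [inner_uvec]; exact hav.trans hc.symm⟩
  · obtain ⟨b, hb, hbv⟩ := med_attained hB (v θ)
    exact ⟨b, hb, by rw [inner_uvec]; exact hbv.trans hmedeq.symm⟩

lemma reduce (A : Finset E) (hA : A.Nonempty) :
    ∃ A' : Finset E, A' ⊆ A ∧ A'.Nonempty ∧ Odd A'.card ∧
      ∀ (p : E → Prop) (_ : DecidablePred p),
        2 * (A'.filter p).card ≤ A'.card → 2 * (A.filter p).card ≤ A.card := by
  classical
  by_cases h : Odd A.card
  · exact ⟨A, Finset.Subset.refl A, hA, h, fun p _ hp => hp⟩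
  · obtain ⟨a0, ha0⟩ := hA
    rw [Nat.not_odd_iff_even] at h
    obtain ⟨m, hm⟩ := h
    have hpos := Finset.card_pos.2 ⟨a0, ha0⟩
    have hce : (A.erase a0).card = A.card - 1 := Finset.card_erase_of_mem ha0
    refine ⟨A.erase a0, Finset.erase_subset _ _, ?_, ?_, ?_⟩
    · rw [← Finset.card_pos, hce]; omega
    · rw [hce]; exact ⟨m - 1, by omega⟩
    · intro p _ hp
      have hsub : A.filter p ⊆ insert a0 ((A.erase a0).filter p) := by
        intro x hx
        rcases eq_or_ne x a0 with rfl | hne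
        · exact Finset.mem_insert_self _ _
        · exact Finset.mem_insert_of_mem (Finset.mem_filter.2
            ⟨Finset.mem_erase.2 ⟨hne, (Finset.mem_filter.1 hx).1⟩, (Finset.mem_filter.1 hx).2⟩)
      have h1 : (A.filter p).card ≤ ((A.erase a0).filter p).card + 1 :=
        (Finset.card_le_card hsub).trans (Finset.card_insert_le _ _)
      rw [hce] at hp
      omega

end HamAux

open MeasureTheory

/-- For every pair of nonempty finite sets `A`, `B` in the plane, there is a line
(given by a unit normal `u` and offset `c`) that bisects both `A` and `B`
(at most half the points strictly on each side) and contains a point of each. -/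
theorem ham_sandwich_mayo_discrete_plane
    (A B : Finset (EuclideanSpace ℝ (Fin 2))) (hA : A.Nonempty) (hB : B.Nonempty) :
    ∃ (u : EuclideanSpace ℝ (Fin 2)) (c : ℝ), ‖u‖ = 1 ∧
      2 * (A.filter (fun x => c < (inner ℝ u x : ℝ))).card ≤ A.card ∧
      2 * (A.filter (fun x => (inner ℝ u x : ℝ) < c)).card ≤ A.card ∧
      2 * (B.filter (fun x => c < (inner ℝ u x : ℝ))).card ≤ B.card ∧
      2 * (B.filter (fun x => (inner ℝ u x : ℝ) < c)).card ≤ B.card ∧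
      (∃ a ∈ A, (inner ℝ u a : ℝ) = c) ∧ (∃ b ∈ B, (inner ℝ u b : ℝ) = c) := by
  obtain ⟨A', hA'sub, hA'ne, hA'odd, hAtr⟩ := HamAux.reduce A hA
  obtain ⟨B', hB'sub, hB'ne, hB'odd, hBtr⟩ := HamAux.reduce B hB
  obtain ⟨u, c, hu, h1, h2, h3, h4, ⟨a, ha, hac⟩, ⟨b, hb, hbc⟩⟩ :=
    HamAux.core A' B' hA'ne hB'ne hA'odd hB'odd
  exact ⟨u, c, hu, hAtr _ _ h1, hAtr _ _ h2, hBtr _ _ h3, hBtr _ _ h4,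
    ⟨a, hA'sub ha, hac⟩, ⟨b, hB'sub hb, hbc⟩⟩
end

section
/- Let A be the union of the two open unit disks in ℝ² centered at (−1,1) and (−1,−1), and B the union of the two open unit disks centered at (1,1) and (1,−1). Then the line y = 0 is the unique line that bisects both A and B in Lebesgue measure, it intersects the closures of A and B, but it intersects neither A nor B. -/
open MeasureTheory Metric

/-- A point of the Euclidean plane with given coordinates. -/
noncomputable def pt (a b : ℝ) : EuclideanSpace ℝ (Fin 2) :=
  (EuclideanSpace.equiv (Fin 2) ℝ).symm ![a, b]

namespace MayoAux

open scoped ENNReal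

abbrev E2 := EuclideanSpace ℝ (Fin 2)

@[simp] lemma pt_zero (a b : ℝ) : pt a b 0 = a := rfl
@[simp] lemma pt_one (a b : ℝ) : pt a b 1 = b := rfl

lemma inner_formula (x y : E2) : (inner ℝ x y : ℝ) = x 0 * y 0 + x 1 * y 1 := by
  simp [PiLp.inner_apply, Fin.sum_univ_two, RCLike.inner_apply, mul_comm]

lemma coord_dist (x y : E2) (i : Fin 2) : |x i - y i| ≤ dist x y := by
  rw [EuclideanSpace.dist_eq]
  rw [show |x i - y i| = √((x i - y i)^2) from (Real.sqrt_sq_eq_abs _).symm]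
  apply Real.sqrt_le_sqrt
  have h : (x i - y i)^2 = dist (x i) (y i) ^ 2 := by rw [Real.dist_eq, sq_abs]
  rw [h]
  exact Finset.single_le_sum (f := fun j => dist (x j) (y j) ^ 2) (fun j _ => sq_nonneg _)
    (Finset.mem_univ i)

lemma coord_norm (x : E2) (i : Fin 2) : |x i| ≤ ‖x‖ := by
  simpa using coord_dist x 0 i

lemma dist_pt (a b a' b' : ℝ) : dist (pt a b) (pt a' b') = √((a-a')^2 + (b-b')^2) := by
  rw [EuclideanSpace.dist_eq, Fin.sum_univ_two]
  simp [Real.dist_eq, sq_abs]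

lemma norm_pt (a b : ℝ) : ‖pt a b‖ = √(a^2 + b^2) := by
  rw [EuclideanSpace.norm_eq, Fin.sum_univ_two]
  simp [Real.norm_eq_abs, sq_abs]

noncomputable def rotL (a b : ℝ) : E2 →ₗ[ℝ] E2 where
  toFun x := pt (b * x 0 + a * x 1) (-a * x 0 + b * x 1)
  map_add' x y := by
    ext i; fin_cases i <;> simp [PiLp.add_apply] <;> ring
  map_smul' c x := by
    ext i; fin_cases i <;> simp [PiLp.smul_apply, smul_eq_mul] <;> ring

noncomputable def rot (a b : ℝ) (hab : a^2 + b^2 = 1) : E2 ≃ₗᵢ[ℝ] E2 :=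
  ((rotL a b).isometryOfInner (by
    intro x y
    rw [inner_formula, inner_formula]
    show (b * x 0 + a * x 1) * (b * y 0 + a * y 1) + (-a * x 0 + b * x 1) * (-a * y 0 + b * y 1) = _
    linear_combination (x 0 * y 0 + x 1 * y 1) * hab)).toLinearIsometryEquiv rfl

lemma rot_apply (a b : ℝ) (hab : a^2+b^2=1) (x : E2) :
    rot a b hab x = pt (b * x 0 + a * x 1) (-a * x 0 + b * x 1) := rfl

lemma inner_rot (a b : ℝ) (hab : a^2+b^2=1) (x : E2) :
    (inner ℝ (pt a b) (rot a b hab x) : ℝ) = x 1 := by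
  rw [rot_apply a b hab x, inner_formula]
  simp only [pt_zero, pt_one]
  linear_combination x 1 * hab

noncomputable def Fv (d : ℝ) : ℝ≥0∞ := volume (ball (0:E2) 1 ∩ {x | d < x 1})

lemma meas_inner_gt (u : E2) (c : ℝ) : MeasurableSet {x : E2 | c < inner ℝ u x} :=
  (isOpen_lt continuous_const (Continuous.inner continuous_const continuous_id)).measurableSet

lemma cap_gt (a b : ℝ) (hab : a^2 + b^2 = 1) (p : E2) (c : ℝ) :
    volume (ball p 1 ∩ {x | c < (inner ℝ (pt a b) x : ℝ)}) = Fv (c - inner ℝ (pt a b) p) := by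
  set u : E2 := pt a b
  have hmeas : MeasurableSet (ball p 1 ∩ {x : E2 | c < (inner ℝ u x : ℝ)}) :=
    measurableSet_ball.inter (meas_inner_gt u c)
  have h1 := (measurePreserving_add_right (volume : Measure E2) p).measure_preimage
    hmeas.nullMeasurableSet
  have hpre : (· + p) ⁻¹' (ball p 1 ∩ {x : E2 | c < (inner ℝ u x : ℝ)})
      = ball (0:E2) 1 ∩ {x | c - inner ℝ u p < (inner ℝ u x : ℝ)} := by
    ext x
    simp only [Set.mem_preimage, Set.mem_inter_iff, mem_ball, Set.mem_setOf_eq,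
      dist_eq_norm, add_sub_cancel_right, inner_add_right, sub_zero]
    constructor
    · rintro ⟨h, h'⟩; exact ⟨h, by linarith⟩
    · rintro ⟨h, h'⟩; exact ⟨h, by linarith⟩
  rw [hpre] at h1
  rw [← h1]
  have hmeas2 : MeasurableSet (ball (0:E2) 1 ∩ {x : E2 | c - inner ℝ u p < (inner ℝ u x : ℝ)}) :=
    measurableSet_ball.inter (meas_inner_gt u _)
  have h2 := ((rot a b hab).measurePreserving).measure_preimage hmeas2.nullMeasurableSet
  have hpre2 : (rot a b hab) ⁻¹' (ball (0:E2) 1 ∩ {x : E2 | c - inner ℝ u p < (inner ℝ u x : ℝ)})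
      = ball (0:E2) 1 ∩ {x | c - inner ℝ u p < x 1} := by
    ext x
    simp only [Set.mem_preimage, Set.mem_inter_iff, mem_ball, Set.mem_setOf_eq,
      dist_zero_right, (rot a b hab).norm_map, (show inner ℝ u (rot a b hab x) = x 1 from inner_rot a b hab x)]
  rw [hpre2] at h2
  rw [← h2]
  rfl

noncomputable def Vb : ℝ≥0∞ := volume (ball (0:E2) 1)

lemma Vb_ne_top : Vb ≠ ⊤ := (measure_ball_lt_top).ne
lemma Vb_ne_zero : Vb ≠ 0 := (measure_ball_pos volume 0 one_pos).ne'

lemma Fv_full {d : ℝ} (hd : d ≤ -1) : Fv d = Vb := by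
  unfold Fv Vb
  congr 1
  rw [Set.inter_eq_left]
  intro x hx
  have h2 : ‖x‖ < 1 := by simpa [dist_zero_right] using hx
  have h3 := abs_lt.mp (lt_of_le_of_lt (coord_norm x 1) h2)
  show d < x 1
  linarith [h3.1]

lemma Fv_zero {d : ℝ} (hd : 1 ≤ d) : Fv d = 0 := by
  unfold Fv
  have he : ball (0:E2) 1 ∩ {x | d < x 1} = ∅ := by
    rw [Set.eq_empty_iff_forall_notMem]
    rintro x ⟨hx, hx'⟩
    have h2 : ‖x‖ < 1 := by simpa [dist_zero_right] using hx
    have h3 := abs_lt.mp (lt_of_le_of_lt (coord_norm x 1) h2)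
    simp only [Set.mem_setOf_eq] at hx'
    linarith [h3.2]
  rw [he, measure_empty]

lemma slab_null (d : ℝ) : volume {x : E2 | x 1 = d} = 0 := by
  have h0 : volume {x : E2 | x 1 = 0} = 0 := by
    have heq : {x : E2 | x 1 = 0} = (LinearMap.ker (EuclideanSpace.proj (𝕜 := ℝ) (1 : Fin 2) : E2 →ₗ[ℝ] ℝ) : Set E2) := by
      ext x; simp [LinearMap.mem_ker]
    rw [heq]
    apply Measure.addHaar_submodule
    intro h
    have h2 : (pt 0 1 : E2) ∈ LinearMap.ker (EuclideanSpace.proj (𝕜 := ℝ) (1 : Fin 2) : E2 →ₗ[ℝ] ℝ) :=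
      h ▸ Submodule.mem_top
    rw [LinearMap.mem_ker] at h2
    exact one_ne_zero h2
  have hmeas : MeasurableSet {x : E2 | x 1 = d} :=
    measurableSet_eq_fun (by fun_prop) measurable_const
  have hpre := (measurePreserving_add_right (volume : Measure E2) (pt 0 d)).measure_preimage
    hmeas.nullMeasurableSet
  rw [← hpre]
  have heq : (· + pt 0 d) ⁻¹' {x : E2 | x 1 = d} = {x : E2 | x 1 = 0} := by
    ext x
    simp only [Set.mem_preimage, Set.mem_setOf_eq, PiLp.add_apply, pt_one]
    constructor <;> intro h <;> linarith
  rw [heq, h0]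

lemma inner_pt01 (x : E2) : (inner ℝ (pt 0 1) x : ℝ) = x 1 := by
  rw [inner_formula]; simp

lemma cap_lt (a b : ℝ) (hab : a^2 + b^2 = 1) (p : E2) (c : ℝ) :
    volume (ball p 1 ∩ {x | (inner ℝ (pt a b) x : ℝ) < c}) = Fv (inner ℝ (pt a b) p - c) := by
  have hab' : (-a)^2 + (-b)^2 = 1 := by ring_nf; linarith [hab]
  have hset : {x : E2 | (inner ℝ (pt a b) x : ℝ) < c} = {x : E2 | -c < (inner ℝ (pt (-a) (-b)) x : ℝ)} := by
    ext x
    rw [Set.mem_setOf_eq, Set.mem_setOf_eq, inner_formula, inner_formula]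
    simp only [pt_zero, pt_one]
    constructor <;> intro h <;> linarith
  have hip : (inner ℝ (pt (-a) (-b)) p : ℝ) = -(inner ℝ (pt a b) p : ℝ) := by
    rw [inner_formula, inner_formula]; simp only [pt_zero, pt_one]; ring
  rw [hset, cap_gt (-a) (-b) hab' p (-c), hip]
  congr 1
  ring

lemma Fv_add (d : ℝ) : Fv d + Fv (-d) = Vb := by
  have hlt : volume (ball (0:E2) 1 ∩ {x | x 1 < d}) = Fv (-d) := by
    have h := cap_lt 0 1 (by norm_num) 0 d
    have hs : {x : E2 | (inner ℝ (pt 0 1) x : ℝ) < d} = {x : E2 | x 1 < d} := by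
      ext x; rw [Set.mem_setOf_eq, Set.mem_setOf_eq, inner_pt01]
    rw [hs] at h
    rw [h, inner_pt01]
    norm_num
  have hmeas : MeasurableSet {x : E2 | d < x 1} :=
    (isOpen_lt continuous_const (by fun_prop)).measurableSet
  have key := measure_inter_add_diff (μ := volume) (ball (0:E2) 1) hmeas
  have hdiff : ball (0:E2) 1 \ {x | d < x 1} = ball (0:E2) 1 ∩ {x | x 1 ≤ d} := by
    ext x
    simp only [Set.mem_diff, Set.mem_inter_iff, Set.mem_setOf_eq]
    exact ⟨fun ⟨h, h'⟩ => ⟨h, le_of_not_gt h'⟩, fun ⟨h, h'⟩ => ⟨h, not_lt_of_ge h'⟩⟩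
  rw [hdiff] at key
  have hle : volume (ball (0:E2) 1 ∩ {x | x 1 ≤ d}) = volume (ball (0:E2) 1 ∩ {x | x 1 < d}) := by
    apply le_antisymm
    · have hsub : ball (0:E2) 1 ∩ {x | x 1 ≤ d} ⊆ (ball (0:E2) 1 ∩ {x | x 1 < d}) ∪ {x | x 1 = d} := by
        rintro x ⟨hx, hx'⟩
        simp only [Set.mem_setOf_eq] at hx'
        rcases lt_or_eq_of_le hx' with h | h
        · exact Or.inl ⟨hx, h⟩
        · exact Or.inr h
      calc volume (ball (0:E2) 1 ∩ {x | x 1 ≤ d})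
          ≤ volume ((ball (0:E2) 1 ∩ {x | x 1 < d}) ∪ {x | x 1 = d}) := measure_mono hsub
        _ ≤ volume (ball (0:E2) 1 ∩ {x | x 1 < d}) + volume {x : E2 | x 1 = d} := measure_union_le _ _
        _ = volume (ball (0:E2) 1 ∩ {x | x 1 < d}) := by rw [slab_null, add_zero]
    · exact measure_mono (Set.inter_subset_inter_right _ (fun x hx => le_of_lt (Set.mem_setOf_eq ▸ hx)))
  rw [hle, hlt] at key
  unfold Fv Vb
  exact key

lemma Fv_strict {s t : ℝ} (hst : s < t) (ht : -1 < t) (hs : s < 1) : Fv t < Fv s := by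
  set m := (max s (-1) + min t 1) / 2 with hm
  have h1 : max s (-1) < min t 1 := by
    rcases max_cases s (-1) with ⟨h, _⟩ | ⟨h, _⟩ <;> rcases min_cases t 1 with ⟨h', _⟩ | ⟨h', _⟩ <;>
      rw [h, h'] <;> linarith
  have hm1 : -1 < m := by have := le_max_right s (-1); rw [hm]; linarith
  have hm2 : m < 1 := by have := min_le_right t 1; rw [hm]; linarith
  have hms : s < m := by have := le_max_left s (-1); rw [hm]; linarith
  have hmt : m < t := by have := min_le_left t 1; rw [hm]; linarith
  set U : Set E2 := ball (0:E2) 1 ∩ ({x | s < x 1} ∩ {x | x 1 < t}) with hU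
  have hUopen : IsOpen U :=
    isOpen_ball.inter ((isOpen_lt continuous_const (by fun_prop)).inter
      (isOpen_lt (by fun_prop) continuous_const))
  have hUne : U.Nonempty := by
    refine ⟨pt 0 m, ?_, ?_, ?_⟩
    · rw [mem_ball, dist_zero_right, norm_pt]
      rw [show (0:ℝ)^2 + m^2 = m^2 by ring, Real.sqrt_sq_eq_abs]
      exact abs_lt.mpr ⟨hm1, hm2⟩
    · simpa using hms
    · simpa using hmt
  have hUpos : 0 < volume U := hUopen.measure_pos volume hUne
  have hdisj : Disjoint (ball (0:E2) 1 ∩ {x | t < x 1}) U := by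
    rw [Set.disjoint_left]
    rintro x ⟨_, hx⟩ ⟨_, _, hx'⟩
    simp only [Set.mem_setOf_eq] at hx hx'
    linarith
  have hsub : (ball (0:E2) 1 ∩ {x | t < x 1}) ∪ U ⊆ ball (0:E2) 1 ∩ {x | s < x 1} := by
    rintro x (⟨h, h'⟩ | ⟨h, h', _⟩)
    · refine ⟨h, ?_⟩; simp only [Set.mem_setOf_eq] at *; linarith
    · exact ⟨h, h'⟩
  have hkey : volume (ball (0:E2) 1 ∩ {x | t < x 1}) + volume U
      ≤ volume (ball (0:E2) 1 ∩ {x | s < x 1}) := by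
    rw [← measure_union hdisj hUopen.measurableSet]
    exact measure_mono hsub
  have hne : Fv t ≠ ⊤ := by
    have hle : Fv t ≤ Vb := measure_mono Set.inter_subset_left
    exact (lt_of_le_of_lt hle (lt_top_iff_ne_top.mpr Vb_ne_top)).ne
  exact lt_of_lt_of_le (ENNReal.lt_add_right hne hUpos.ne') hkey

lemma Fv_eq_cases {s t : ℝ} (h : Fv s = Fv t) :
    s = t ∨ (1 ≤ s ∧ 1 ≤ t) ∨ (s ≤ -1 ∧ t ≤ -1) := by
  rcases lt_trichotomy s t with hst | hst | hst
  · by_cases hs : s < 1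
    · by_cases ht : -1 < t
      · exact absurd h (Fv_strict hst ht hs).ne'
      · right; right; constructor <;> linarith [not_lt.mp ht]
    · right; left; constructor <;> linarith [not_lt.mp hs]
  · exact Or.inl hst
  · by_cases hs : t < 1
    · by_cases ht : -1 < s
      · exact absurd h (Fv_strict hst ht hs).ne
      · right; right; constructor <;> linarith [not_lt.mp ht]
    · right; left; constructor <;> linarith [not_lt.mp hs]


lemma Fv_ne_top (d : ℝ) : Fv d ≠ ⊤ := by
  have hle : Fv d ≤ Vb := measure_mono Set.inter_subset_left
  exact (lt_of_le_of_lt hle (lt_top_iff_ne_top.mpr Vb_ne_top)).ne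

lemma meas_inner_lt (u : E2) (c : ℝ) : MeasurableSet {x : E2 | (inner ℝ u x : ℝ) < c} :=
  (isOpen_lt (Continuous.inner continuous_const continuous_id) continuous_const).measurableSet

lemma vol_pair (p q : E2) (hd : Disjoint (ball p 1) (ball q 1)) :
    volume (ball p 1 ∪ ball q 1) = Vb + Vb := by
  rw [measure_union hd measurableSet_ball, Measure.addHaar_ball_center volume p,
    Measure.addHaar_ball_center volume q]
  rfl

lemma half_pair : (Vb + Vb) / 2 = Vb := by
  rw [ENNReal.add_div, ENNReal.add_halves]

lemma pair_cap_gt (a b : ℝ) (hab : a^2 + b^2 = 1) (p q : E2)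
    (hd : Disjoint (ball p 1) (ball q 1)) (c : ℝ) :
    volume ((ball p 1 ∪ ball q 1) ∩ {x | c < (inner ℝ (pt a b) x : ℝ)})
      = Fv (c - inner ℝ (pt a b) p) + Fv (c - inner ℝ (pt a b) q) := by
  rw [Set.union_inter_distrib_right,
    measure_union (hd.mono Set.inter_subset_left Set.inter_subset_left)
      (measurableSet_ball.inter (meas_inner_gt _ _)),
    cap_gt a b hab, cap_gt a b hab]

lemma pair_cap_lt (a b : ℝ) (hab : a^2 + b^2 = 1) (p q : E2)
    (hd : Disjoint (ball p 1) (ball q 1)) (c : ℝ) :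
    volume ((ball p 1 ∪ ball q 1) ∩ {x | (inner ℝ (pt a b) x : ℝ) < c})
      = Fv (inner ℝ (pt a b) p - c) + Fv (inner ℝ (pt a b) q - c) := by
  rw [Set.union_inter_distrib_right,
    measure_union (hd.mono Set.inter_subset_left Set.inter_subset_left)
      (measurableSet_ball.inter (meas_inner_lt _ _)),
    cap_lt a b hab, cap_lt a b hab]

lemma sqrt_four : √(4:ℝ) = 2 := by
  rw [show (4:ℝ) = 2^2 by norm_num, Real.sqrt_sq (by norm_num : (0:ℝ) ≤ 2)]

lemma disj_vert (x : ℝ) : Disjoint (ball (pt x 1) 1) (ball (pt x (-1)) 1) := by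
  apply ball_disjoint_ball
  rw [dist_pt, show (x - x)^2 + ((1:ℝ) - (-1))^2 = 4 by ring, sqrt_four]
  norm_num

lemma inner_pt_pt (a b x y : ℝ) : (inner ℝ (pt a b) (pt x y) : ℝ) = a * x + b * y := by
  rw [inner_formula]; simp


lemma pair_analysis (a b c h : ℝ) (hab : a^2 + b^2 = 1)
    (hvol : volume ((ball (pt h 1) 1 ∪ ball (pt h (-1)) 1) ∩ {x | c < (inner ℝ (pt a b) x : ℝ)})
      = (Vb + Vb) / 2) :
    c = a * h ∨ (a = 0 ∧ b^2 = 1 ∧ c = 0) := by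
  rw [pair_cap_gt a b hab _ _ (disj_vert h) c, half_pair, inner_pt_pt a b h 1,
    inner_pt_pt a b h (-1)] at hvol
  have hadd := Fv_add (c - (a*h + b*(-1)))
  have hcancel : Fv (c - (a*h + b*1)) = Fv (-(c - (a*h + b*(-1)))) := by
    refine (ENNReal.add_right_inj (Fv_ne_top (c - (a*h + b*(-1))))).mp ?_
    calc Fv (c - (a*h + b*(-1))) + Fv (c - (a*h + b*1))
        = Fv (c - (a*h + b*1)) + Fv (c - (a*h + b*(-1))) := add_comm _ _
      _ = Vb := hvol
      _ = Fv (c - (a*h + b*(-1))) + Fv (-(c - (a*h + b*(-1)))) := hadd.symm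
  rcases Fv_eq_cases hcancel with heq | ⟨h1, h2⟩ | ⟨h1, h2⟩
  · left; linarith
  · right
    have hb : b ≤ -1 := by linarith
    have ha : a = 0 := by nlinarith
    have hb1 : b = -1 := by nlinarith
    rw [ha, hb1] at h1 h2
    refine ⟨ha, by rw [hb1]; norm_num, ?_⟩
    have hc1 : 0 ≤ c := by nlinarith
    have hc2 : c ≤ 0 := by nlinarith
    linarith
  · right
    have hb : 1 ≤ b := by linarith
    have ha : a = 0 := by nlinarith
    have hb1 : b = 1 := by nlinarith
    rw [ha, hb1] at h1 h2
    refine ⟨ha, by rw [hb1]; norm_num, ?_⟩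
    have hc1 : 0 ≤ c := by nlinarith
    have hc2 : c ≤ 0 := by nlinarith
    linarith


lemma not_mem_vert (x : E2) (hx1 : x 1 = 0) (h : ℝ)
    (hb : x ∈ ball (pt h 1) 1 ∪ ball (pt h (-1)) 1) : False := by
  rcases hb with hx | hx
  · have h1 := (coord_dist x (pt h 1) 1).trans_lt (mem_ball.mp hx)
    rw [pt_one, hx1] at h1; norm_num at h1
  · have h1 := (coord_dist x (pt h (-1)) 1).trans_lt (mem_ball.mp hx)
    rw [pt_one, hx1] at h1; norm_num at h1

lemma mem_closure_vert (h : ℝ) :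
    pt h 0 ∈ closure (ball (pt h 1) 1 ∪ ball (pt h (-1)) 1) := by
  refine closure_mono Set.subset_union_left ?_
  rw [closure_ball _ one_ne_zero, mem_closedBall, dist_pt,
    show (h - h)^2 + ((0:ℝ) - 1)^2 = 1 by ring, Real.sqrt_one]

end MayoAux

open MayoAux


/-- Example: `A` the union of the open unit disks centered at `(-1,1)` and `(-1,-1)`, and
`B` the union of the open unit disks centered at `(1,1)` and `(1,-1)`. The line `y = 0`
(with unit normal `(0,1)` and offset `0`) bisects both `A` and `B`; it is the unique such
line; it meets the closures of `A` and `B` but meets neither `A` nor `B`. -/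
theorem mayo_example_open_disks :
    let A : Set (EuclideanSpace ℝ (Fin 2)) := ball (pt (-1) 1) 1 ∪ ball (pt (-1) (-1)) 1
    let B : Set (EuclideanSpace ℝ (Fin 2)) := ball (pt 1 1) 1 ∪ ball (pt 1 (-1)) 1
    let L : Set (EuclideanSpace ℝ (Fin 2)) := {x | (inner ℝ (pt 0 1) x : ℝ) = 0}
    (volume (A ∩ {x | (0:ℝ) < inner ℝ (pt 0 1) x}) = volume A / 2 ∧
     volume (A ∩ {x | (inner ℝ (pt 0 1) x : ℝ) < 0}) = volume A / 2 ∧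
     volume (B ∩ {x | (0:ℝ) < inner ℝ (pt 0 1) x}) = volume B / 2 ∧
     volume (B ∩ {x | (inner ℝ (pt 0 1) x : ℝ) < 0}) = volume B / 2) ∧
    (∀ (u : EuclideanSpace ℝ (Fin 2)) (c : ℝ), ‖u‖ = 1 →
      volume (A ∩ {x | c < (inner ℝ u x : ℝ)}) = volume A / 2 →
      volume (A ∩ {x | (inner ℝ u x : ℝ) < c}) = volume A / 2 →
      volume (B ∩ {x | c < (inner ℝ u x : ℝ)}) = volume B / 2 →
      volume (B ∩ {x | (inner ℝ u x : ℝ) < c}) = volume B / 2 →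
      {x : EuclideanSpace ℝ (Fin 2) | (inner ℝ u x : ℝ) = c} = L) ∧
    (L ∩ closure A).Nonempty ∧ (L ∩ closure B).Nonempty ∧
    L ∩ A = ∅ ∧ L ∩ B = ∅ := by
  intro A B L
  have hdA := disj_vert (-1)
  have hdB := disj_vert (1:ℝ)
  have hA' : A = ball (pt (-1) 1) 1 ∪ ball (pt (-1) (-1)) 1 := rfl
  have hB' : B = ball (pt 1 1) 1 ∪ ball (pt 1 (-1)) 1 := rfl
  have hVA : volume A = Vb + Vb := vol_pair _ _ hdA
  have hVB : volume B = Vb + Vb := vol_pair _ _ hdB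
  have h01 : (0:ℝ)^2 + (1:ℝ)^2 = 1 := by norm_num
  refine ⟨⟨?_, ?_, ?_, ?_⟩, ?_, ?_, ?_, ?_, ?_⟩
  · rw [hVA, half_pair, hA', pair_cap_gt 0 1 h01 _ _ hdA 0, inner_pt_pt, inner_pt_pt]
    norm_num
    rw [Fv_full (by norm_num : (-1:ℝ) ≤ -1), Fv_zero (le_refl 1), add_zero]
  · rw [hVA, half_pair, hA', pair_cap_lt 0 1 h01 _ _ hdA 0, inner_pt_pt, inner_pt_pt]
    norm_num
    rw [Fv_full (by norm_num : (-1:ℝ) ≤ -1), Fv_zero (le_refl 1), zero_add]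
  · rw [hVB, half_pair, hB', pair_cap_gt 0 1 h01 _ _ hdB 0, inner_pt_pt, inner_pt_pt]
    norm_num
    rw [Fv_full (by norm_num : (-1:ℝ) ≤ -1), Fv_zero (le_refl 1), add_zero]
  · rw [hVB, half_pair, hB', pair_cap_lt 0 1 h01 _ _ hdB 0, inner_pt_pt, inner_pt_pt]
    norm_num
    rw [Fv_full (by norm_num : (-1:ℝ) ≤ -1), Fv_zero (le_refl 1), zero_add]
  · intro u c hu hA1 _ hB1 _
    obtain ⟨a, b, rfl⟩ : ∃ a b, u = pt a b :=
      ⟨u 0, u 1, by ext i; fin_cases i <;> rfl⟩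
    have hab : a^2 + b^2 = 1 := by
      have h2 : ‖pt a b‖^2 = 1 := by rw [hu]; norm_num
      rwa [norm_pt, Real.sq_sqrt (by positivity)] at h2
    rw [hVA, hA'] at hA1
    rw [hVB, hB'] at hB1
    have hres1 := pair_analysis a b c (-1) hab hA1
    have hres2 := pair_analysis a b c 1 hab hB1
    have hac : a = 0 ∧ c = 0 := by
      rcases hres1 with h1 | ⟨ha, _, hc⟩
      · rcases hres2 with h2 | ⟨ha, _, hc⟩
        · constructor <;> linarith
        · exact ⟨ha, hc⟩
      · exact ⟨ha, hc⟩
    have hb2 : b^2 = 1 := by nlinarith [hac.1]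
    have hbne : b ≠ 0 := fun hb => by rw [hb] at hb2; norm_num at hb2
    ext x
    show (inner ℝ (pt a b) x : ℝ) = c ↔ (inner ℝ (pt 0 1) x : ℝ) = 0
    rw [inner_formula, inner_formula]
    simp only [pt_zero, pt_one, hac.1, hac.2]
    constructor
    · intro hx
      have hbx : b * x 1 = 0 := by linarith
      rcases mul_eq_zero.mp hbx with h | h
      · exact absurd h hbne
      · rw [h]; ring
    · intro hx
      have hx1 : x 1 = 0 := by linarith
      rw [hx1]; ring
  · exact ⟨pt (-1) 0, by show (inner ℝ (pt 0 1) (pt (-1) 0) : ℝ) = 0; rw [inner_pt_pt]; norm_num,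
      mem_closure_vert (-1)⟩
  · exact ⟨pt 1 0, by show (inner ℝ (pt 0 1) (pt 1 0) : ℝ) = 0; rw [inner_pt_pt]; norm_num,
      mem_closure_vert 1⟩
  · rw [Set.eq_empty_iff_forall_notMem]
    rintro x ⟨hxL, hxA⟩
    have hx1 : x 1 = 0 := by
      have := Set.mem_setOf_eq ▸ hxL
      rwa [inner_pt01] at this
    exact not_mem_vert x hx1 (-1) hxA
  · rw [Set.eq_empty_iff_forall_notMem]
    rintro x ⟨hxL, hxB⟩
    have hx1 : x 1 = 0 := by
      have := Set.mem_setOf_eq ▸ hxL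
      rwa [inner_pt01] at this
    exact not_mem_vert x hx1 1 hxB
end

section
/- Let μ₁ and μ₂ be the probability measures on ℝ² defined by μ₁({(k,1)}) = μ₁({(k,−1)}) = 2^{-(k+1)} for k ∈ ℕ₊ and μ₂({(−k,2)}) = μ₂({(−k,−2)}) = 2^{-(k+1)} for k ∈ ℕ₊. Then every line that simultaneously bisects μ₁ and μ₂ is a horizontal line y = c with c ∈ [−1,1], and no such line intersects the support of μ₂. -/
open MeasureTheory Metric

noncomputable def w (k : ℕ+) : ENNReal := ((2:ENNReal) ^ ((k:ℕ) + 1))⁻¹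

@[simp] lemma pt_apply_zero (a b : ℝ) : (pt a b) 0 = a := rfl
@[simp] lemma pt_apply_one (a b : ℝ) : (pt a b) 1 = b := rfl

lemma tsum_w : ∑' k : ℕ+, w k = 2⁻¹ := by
  unfold w
  rw [← Equiv.pnatEquivNat.symm.tsum_eq]
  have hcoe : ∀ n : ℕ, ((Equiv.pnatEquivNat.symm n : ℕ+) : ℕ) = n + 1 := fun n => rfl
  simp only [hcoe]
  have : ∀ n : ℕ, ((2:ENNReal) ^ (n + 1 + 1))⁻¹ = (2:ENNReal)⁻¹ ^ n * (2⁻¹ * 2⁻¹) := by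
    intro n
    rw [pow_add, pow_add, ENNReal.mul_inv (by simp) (by simp), ENNReal.mul_inv (by simp) (by simp),
      ← ENNReal.inv_pow]
    simp [mul_assoc]
  simp only [this]
  rw [ENNReal.tsum_mul_right, ENNReal.tsum_geometric, ENNReal.one_sub_inv_two, inv_inv,
    ← mul_assoc, ENNReal.mul_inv_cancel two_ne_zero ENNReal.ofNat_ne_top, one_mul]

lemma w_ne_zero (k : ℕ+) : w k ≠ 0 :=
  ENNReal.inv_ne_zero.mpr (ENNReal.pow_ne_top ENNReal.ofNat_ne_top)

variable {X : Type*} [MeasurableSpace X] [MeasurableSingletonClass X]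

lemma sum_apply_eq (p q : ℕ+ → X) {E : Set X} (hE : MeasurableSet E) :
    Measure.sum (fun k : ℕ+ => w k • (Measure.dirac (p k) + Measure.dirac (q k))) E
      = ∑' k : ℕ+, w k * (E.indicator 1 (p k) + E.indicator 1 (q k)) := by
  rw [Measure.sum_apply _ hE]
  congr 1; funext k
  rw [Measure.smul_apply, Measure.add_apply, Measure.dirac_apply' _ hE,
    Measure.dirac_apply' _ hE, smul_eq_mul]

lemma full_mass (p q : ℕ+ → X) {E : Set X} (hE : MeasurableSet E)
    (h : ∀ k, p k ∈ E ∧ q k ∈ E) :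
    Measure.sum (fun k : ℕ+ => w k • (Measure.dirac (p k) + Measure.dirac (q k))) E = 1 := by
  rw [sum_apply_eq p q hE]
  have : ∀ k : ℕ+, w k * (E.indicator 1 (p k) + E.indicator 1 (q k)) = w k * 2 := by
    intro k
    rw [Set.indicator_of_mem (h k).1, Set.indicator_of_mem (h k).2, Pi.one_apply]
    norm_num
  simp only [this]
  rw [ENNReal.tsum_mul_right, tsum_w, ENNReal.inv_mul_cancel two_ne_zero ENNReal.ofNat_ne_top]

lemma contra_full (p q : ℕ+ → X) {E : Set X} (hE : MeasurableSet E)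
    (h : ∀ k, p k ∈ E ∧ q k ∈ E) :
    ¬ (Measure.sum (fun k : ℕ+ => w k • (Measure.dirac (p k) + Measure.dirac (q k))) E ≤
       Measure.sum (fun k : ℕ+ => w k • (Measure.dirac (p k) + Measure.dirac (q k)))
         Set.univ / 2) := by
  rw [full_mass p q hE h, full_mass p q MeasurableSet.univ (fun k => ⟨trivial, trivial⟩)]
  intro hle
  have h2 : (1:ENNReal) / 2 < 1 := by
    rw [one_div]
    exact ENNReal.inv_lt_one.mpr ENNReal.one_lt_two
  exact absurd (lt_of_le_of_lt hle h2) (lt_irrefl _)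

lemma lower_mass (p q : ℕ+ → X) {E : Set X} (hE : MeasurableSet E) (k₀ : ℕ+)
    (h1 : ∀ k, p k ∈ E ∨ q k ∈ E) (h2 : p k₀ ∈ E ∧ q k₀ ∈ E) :
    2⁻¹ + w k₀ ≤
      Measure.sum (fun k : ℕ+ => w k • (Measure.dirac (p k) + Measure.dirac (q k))) E := by
  rw [sum_apply_eq p q hE]
  have key : ∀ k : ℕ+, w k + (if k = k₀ then w k₀ else 0)
      ≤ w k * (E.indicator 1 (p k) + E.indicator 1 (q k)) := by
    intro k
    by_cases hk : k = k₀
    · subst hk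
      rw [Set.indicator_of_mem h2.1, Set.indicator_of_mem h2.2, Pi.one_apply, if_pos rfl]
      norm_num [mul_two]
    · rw [if_neg hk, add_zero]
      rcases h1 k with h | h
      · calc w k = w k * 1 := (mul_one _).symm
          _ ≤ _ := by
            gcongr
            rw [Set.indicator_of_mem h, Pi.one_apply]
            exact le_add_of_nonneg_right (zero_le)
      · calc w k = w k * 1 := (mul_one _).symm
          _ ≤ _ := by
            gcongr
            rw [Set.indicator_of_mem h, Pi.one_apply]
            exact le_add_of_nonneg_left (zero_le)
  calc 2⁻¹ + w k₀ = ∑' k : ℕ+, (w k + (if k = k₀ then w k₀ else 0)) := by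
        rw [ENNReal.tsum_add, tsum_w, tsum_ite_eq]
    _ ≤ _ := ENNReal.tsum_le_tsum key

lemma contra_lower (p q : ℕ+ → X) {E : Set X} (hE : MeasurableSet E) (k₀ : ℕ+)
    (h1 : ∀ k, p k ∈ E ∨ q k ∈ E) (h2 : p k₀ ∈ E ∧ q k₀ ∈ E) :
    ¬ (Measure.sum (fun k : ℕ+ => w k • (Measure.dirac (p k) + Measure.dirac (q k))) E ≤
       Measure.sum (fun k : ℕ+ => w k • (Measure.dirac (p k) + Measure.dirac (q k)))
         Set.univ / 2) := by
  intro hle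
  rw [full_mass p q MeasurableSet.univ (fun k => ⟨trivial, trivial⟩), one_div] at hle
  have hlow := (lower_mass p q hE k₀ h1 h2).trans hle
  have : (2:ENNReal)⁻¹ < 2⁻¹ + w k₀ :=
    ENNReal.lt_add_right (ENNReal.inv_ne_top.mpr two_ne_zero) (w_ne_zero k₀)
  exact absurd (this.trans_le hlow) (lt_irrefl _)

set_option maxHeartbeats 1000000 in
/-- Example (non-compact supports): with `μ₁` putting mass `2^{-(k+1)}` at `(k, ±1)` and
`μ₂` putting mass `2^{-(k+1)}` at `(-k, ±2)` for `k ∈ ℕ₊`, every line simultaneously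
bisecting `μ₁` and `μ₂` is a horizontal line `y = c'` with `c' ∈ [-1,1]`, and no such
line meets the support of `μ₂`. -/
theorem example_noncompact_support :
    let μ₁ : Measure (EuclideanSpace ℝ (Fin 2)) :=
      Measure.sum (fun k : ℕ+ =>
        ((2:ENNReal) ^ ((k : ℕ) + 1))⁻¹ •
          (Measure.dirac (pt (k : ℝ) 1) + Measure.dirac (pt (k : ℝ) (-1))))
    let μ₂ : Measure (EuclideanSpace ℝ (Fin 2)) :=
      Measure.sum (fun k : ℕ+ =>
        ((2:ENNReal) ^ ((k : ℕ) + 1))⁻¹ •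
          (Measure.dirac (pt (-(k : ℝ)) 2) + Measure.dirac (pt (-(k : ℝ)) (-2))))
    let S₂ : Set (EuclideanSpace ℝ (Fin 2)) :=
      {x | ∃ k : ℕ+, x = pt (-(k : ℝ)) 2 ∨ x = pt (-(k : ℝ)) (-2)}
    ∀ (u : EuclideanSpace ℝ (Fin 2)) (c : ℝ), ‖u‖ = 1 →
      μ₁ {x | c < (inner ℝ u x : ℝ)} ≤ μ₁ Set.univ / 2 →
      μ₁ {x | (inner ℝ u x : ℝ) < c} ≤ μ₁ Set.univ / 2 →
      μ₂ {x | c < (inner ℝ u x : ℝ)} ≤ μ₂ Set.univ / 2 →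
      μ₂ {x | (inner ℝ u x : ℝ) < c} ≤ μ₂ Set.univ / 2 →
      (∃ c' : ℝ, -1 ≤ c' ∧ c' ≤ 1 ∧
        {x : EuclideanSpace ℝ (Fin 2) | (inner ℝ u x : ℝ) = c} = {x | x 1 = c'}) ∧
      {x : EuclideanSpace ℝ (Fin 2) | (inner ℝ u x : ℝ) = c} ∩ S₂ = ∅ := by
  intro μ₁ μ₂ S₂ u c hu h1p h1m h2p h2m
  have e1 : μ₁ = Measure.sum (fun k : ℕ+ =>
      w k • (Measure.dirac (pt (k : ℝ) 1) + Measure.dirac (pt (k : ℝ) (-1)))) := rfl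
  have e2 : μ₂ = Measure.sum (fun k : ℕ+ =>
      w k • (Measure.dirac (pt (-(k : ℝ)) 2) + Measure.dirac (pt (-(k : ℝ)) (-2)))) := rfl
  rw [e1] at h1p h1m
  rw [e2] at h2p h2m
  -- coordinates of u
  have hinner : ∀ x : EuclideanSpace ℝ (Fin 2), (inner ℝ u x : ℝ) = u 0 * x 0 + u 1 * x 1 := by
    intro x
    simp [PiLp.inner_apply, RCLike.inner_apply, Fin.sum_univ_two, mul_comm]
  set a := u 0 with ha_def
  set b := u 1 with hb_def
  have hip : ∀ p q : ℝ, (inner ℝ u (pt p q) : ℝ) = a * p + b * q := by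
    intro p q
    rw [hinner (pt p q), pt_apply_zero, pt_apply_one]
  have hab : a ^ 2 + b ^ 2 = 1 := by
    have hne := EuclideanSpace.norm_eq u
    rw [hu] at hne
    have h2 : Real.sqrt (∑ i, ‖u i‖ ^ 2) ^ 2 = 1 := by rw [← hne]; norm_num
    rw [Real.sq_sqrt (by positivity)] at h2
    simpa [Fin.sum_univ_two, sq_abs] using h2
  -- measurability
  have hcont : Continuous fun x : EuclideanSpace ℝ (Fin 2) => (inner ℝ u x : ℝ) :=
    Continuous.inner continuous_const continuous_id
  have hgt : MeasurableSet {x : EuclideanSpace ℝ (Fin 2) | c < (inner ℝ u x : ℝ)} :=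
    measurableSet_lt measurable_const hcont.measurable
  have hlt : MeasurableSet {x : EuclideanSpace ℝ (Fin 2) | (inner ℝ u x : ℝ) < c} :=
    measurableSet_lt hcont.measurable measurable_const
  -- the key dichotomy: a = 0
  have hb1 : |b| ≤ 1 := by nlinarith [sq_nonneg a, abs_nonneg b, sq_abs b]
  have ha0 : a = 0 := by
    rcases lt_trichotomy a 0 with haneg | h | hapos
    · -- a < 0 : contradiction
      exfalso
      have hc1 : c ≤ a + |b| := by
        by_contra hcon
        push_neg at hcon
        refine contra_full _ _ hlt ?_ h1m
        intro k
        have hk1 : (1:ℝ) ≤ (k:ℝ) := by exact_mod_cast k.one_le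
        have hak : a * (k:ℝ) ≤ a * 1 := mul_le_mul_of_nonpos_left hk1 haneg.le
        constructor <;>
        · simp only [Set.mem_setOf_eq, hip]
          nlinarith [le_abs_self b, neg_abs_le b]
      obtain ⟨n, hn⟩ := exists_nat_gt ((c + 2 * |b|) / (-a))
      set k₀ : ℕ+ := ⟨n + 1, Nat.succ_pos n⟩ with hk₀_def
      have hk₀ : c + 2 * |b| < (k₀:ℝ) * (-a) := by
        have h1 : ((c + 2 * |b|) / (-a)) < (k₀:ℝ) := by
          have : ((k₀:ℕ):ℝ) = (n:ℝ) + 1 := by norm_num [hk₀_def]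
          rw [this]
          linarith
        exact (div_lt_iff₀ (by linarith : (0:ℝ) < -a)).mp h1
      refine contra_lower _ _ hgt k₀ ?_ ?_ h2p
      · intro k
        have hk1 : (1:ℝ) ≤ (k:ℝ) := by exact_mod_cast k.one_le
        have hak : a * (k:ℝ) ≤ a * 1 := mul_le_mul_of_nonpos_left hk1 haneg.le
        rcases le_or_gt 0 b with hb | hb
        · left
          simp only [Set.mem_setOf_eq, hip]
          rw [abs_of_nonneg hb] at hc1
          nlinarith
        · right
          simp only [Set.mem_setOf_eq, hip]
          rw [abs_of_neg hb] at hc1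
          nlinarith
      · constructor <;>
        · simp only [Set.mem_setOf_eq, hip]
          nlinarith [le_abs_self b, neg_abs_le b]
    · exact h
    · -- a > 0 : contradiction
      exfalso
      have hc1 : a - |b| ≤ c := by
        by_contra hcon
        push_neg at hcon
        refine contra_full _ _ hgt ?_ h1p
        intro k
        have hk1 : (1:ℝ) ≤ (k:ℝ) := by exact_mod_cast k.one_le
        have hak : a * 1 ≤ a * (k:ℝ) := mul_le_mul_of_nonneg_left hk1 hapos.le
        constructor <;>
        · simp only [Set.mem_setOf_eq, hip]
          nlinarith [le_abs_self b, neg_abs_le b]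
      obtain ⟨n, hn⟩ := exists_nat_gt ((2 * |b| - c) / a)
      set k₀ : ℕ+ := ⟨n + 1, Nat.succ_pos n⟩ with hk₀_def
      have hk₀ : 2 * |b| - c < (k₀:ℝ) * a := by
        have h1 : ((2 * |b| - c) / a) < (k₀:ℝ) := by
          have : ((k₀:ℕ):ℝ) = (n:ℝ) + 1 := by norm_num [hk₀_def]
          rw [this]
          linarith
        exact (div_lt_iff₀ hapos).mp h1
      refine contra_lower _ _ hlt k₀ ?_ ?_ h2m
      · intro k
        have hk1 : (1:ℝ) ≤ (k:ℝ) := by exact_mod_cast k.one_le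
        have hak : a * 1 ≤ a * (k:ℝ) := mul_le_mul_of_nonneg_left hk1 hapos.le
        rcases le_or_gt 0 b with hb | hb
        · right
          simp only [Set.mem_setOf_eq, hip]
          rw [abs_of_nonneg hb] at hc1
          nlinarith
        · left
          simp only [Set.mem_setOf_eq, hip]
          rw [abs_of_neg hb] at hc1
          nlinarith
      · constructor <;>
        · simp only [Set.mem_setOf_eq, hip]
          nlinarith [le_abs_self b, neg_abs_le b]
  -- now a = 0, b = ±1
  have hb2 : b ^ 2 = 1 := by nlinarith
  have hbcases : b = 1 ∨ b = -1 := by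
    have : (b - 1) * (b + 1) = 0 := by nlinarith
    rcases mul_eq_zero.mp this with h | h
    · left; linarith
    · right; linarith
  set c' := b * c with hc'_def
  have hline : {x : EuclideanSpace ℝ (Fin 2) | (inner ℝ u x : ℝ) = c} = {x | x 1 = c'} := by
    ext x
    simp only [Set.mem_setOf_eq, hinner, ← ha_def, ← hb_def, ha0, zero_mul, zero_add]
    constructor
    · intro h
      linear_combination b * h - x 1 * hb2
    · intro h
      linear_combination b * h + c * hb2
  have hcu : c' ≤ 1 := by
    by_contra hcon
    push_neg at hcon
    rcases hbcases with hb | hb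
    · have hc : 1 < c := by rw [hc'_def, hb, one_mul] at hcon; exact hcon
      refine contra_full _ _ hlt ?_ h1m
      intro k
      constructor <;> (simp only [Set.mem_setOf_eq, hip, ha0]; nlinarith)
    · have hc : c < -1 := by rw [hc'_def, hb] at hcon; linarith
      refine contra_full _ _ hgt ?_ h1p
      intro k
      constructor <;> (simp only [Set.mem_setOf_eq, hip, ha0]; nlinarith)
  have hcl : -1 ≤ c' := by
    by_contra hcon
    push_neg at hcon
    rcases hbcases with hb | hb
    · have hc : c < -1 := by rw [hc'_def, hb, one_mul] at hcon; exact hcon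
      refine contra_full _ _ hgt ?_ h1p
      intro k
      constructor <;> (simp only [Set.mem_setOf_eq, hip, ha0]; nlinarith)
    · have hc : 1 < c := by rw [hc'_def, hb] at hcon; linarith
      refine contra_full _ _ hlt ?_ h1m
      intro k
      constructor <;> (simp only [Set.mem_setOf_eq, hip, ha0]; nlinarith)
  refine ⟨⟨c', hcl, hcu, hline⟩, ?_⟩
  rw [hline]
  apply Set.eq_empty_iff_forall_notMem.mpr
  rintro x ⟨hx1, hx2⟩
  have hx2' : ∃ k : ℕ+, x = pt (-(k : ℝ)) 2 ∨ x = pt (-(k : ℝ)) (-2) := hx2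
  obtain ⟨k, hk | hk⟩ := hx2'
  · rw [hk] at hx1
    simp only [Set.mem_setOf_eq, pt_apply_one] at hx1
    linarith
  · rw [hk] at hx1
    simp only [Set.mem_setOf_eq, pt_apply_one] at hx1
    linarith
end
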